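/- For every natural number n ≥ 3, the inequality 7·2^(2n−1) − 21·2^(n−1) + 10 < 3·((n − 1)·2^(2n−1) − 2^(n−1) + 2) holds; that is, the POA gate count (7·2^(2n−1) − 21·2^(n−1) + 10)/3 is strictly smaller than the conventional gate count with cancellation (n − 1)·2^(2n−1) − 2^(n−1) + 2. -/
import Mathlib


/-- For every `n ≥ 3`, `7·2^(2n−1) − 21·2^(n−1) + 10 < 3·((n−1)·2^(2n−1) − 2^(n−1) + 2)`:
the POA gate count is strictly smaller than the conventional gate count with
cancellation. -/
theorem poa_lt_conventional (n : ℕ) (hn : 3 ≤ n) :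
    7 * (2 : ℤ) ^ (2 * n - 1) - 21 * (2 : ℤ) ^ (n - 1) + 10
      < 3 * (((n : ℤ) - 1) * (2 : ℤ) ^ (2 * n - 1) - (2 : ℤ) ^ (n - 1) + 2) := by
  obtain ⟨m, rfl⟩ : ∃ m, n = m + 3 := ⟨n - 3, by omega⟩
  have h1 : 2 * (m + 3) - 1 = 2 * m + 5 := by omega
  have h2 : m + 3 - 1 = m + 2 := by omega
  have e1 : (2:ℤ) ^ (2 * m + 5) = 32 * ((2:ℤ) ^ m) ^ 2 := by
    rw [two_mul, pow_add, pow_add]; ring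
  have e2 : (2:ℤ) ^ (m + 2) = 4 * (2:ℤ) ^ m := by rw [pow_add]; ring
  rw [h1, h2, e1, e2]
  have hx : (1 : ℤ) ≤ 2 ^ m := one_le_pow₀ (by norm_num)
  rcases Nat.eq_zero_or_pos m with rfl | hm
  · norm_num
  · have hm' : (1 : ℤ) ≤ m := by exact_mod_cast hm
    push_cast
    nlinarith [mul_le_mul_of_nonneg_right hm' (sq_nonneg ((2:ℤ)^m)), sq_nonneg ((2:ℤ)^m - 1)]
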